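/- If a real homogeneous polynomial h of degree d in n variables has a determinantal representation h = det(x_1 A_1 + ... + x_n A_n) with each A_k a positive semidefinite real d×d matrix, then h is stable, i.e., h(z_1,...,z_n) ≠ 0 whenever all z_j have strictly positive imaginary part, provided h is not identically zero. -/

import Mathlib

open MvPolynomial Matrix ComplexOrder

/-- Complexification of a real positive semidefinite matrix is positive semidefinite. -/
lemma posSemidef_map_complex {d : ℕ} {A : Matrix (Fin d) (Fin d) ℝ} (hA : A.PosSemidef) :
    (A.map (algebraMap ℝ ℂ)).PosSemidef := by
  open scoped MatrixOrder in
  obtain ⟨B, rfl⟩ := CStarAlgebra.nonneg_iff_eq_star_mul_self.mp hA.nonneg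
  rw [star_eq_conjTranspose]
  rw [Matrix.map_mul (f := algebraMap ℝ ℂ),
    Matrix.conjTranspose_map (algebraMap ℝ ℂ) (fun a => by
      simp [Complex.conj_ofReal])]
  exact Matrix.posSemidef_conjTranspose_mul_self _


lemma sum_mulVec' {ι m n α : Type*} [NonUnitalNonAssocSemiring α] [Fintype n]
    (s : Finset ι) (M : ι → Matrix m n α) (v : n → α) :
    (∑ k ∈ s, M k) *ᵥ v = ∑ k ∈ s, (M k *ᵥ v) :=
  map_sum (Matrix.mulVec.addMonoidHomLeft v) M s


lemma dotProduct_sum' {ι m α : Type*} [NonUnitalNonAssocSemiring α] [Fintype m]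
    (s : Finset ι) (v : m → α) (w : ι → m → α) :
    v ⬝ᵥ (∑ k ∈ s, w k) = ∑ k ∈ s, v ⬝ᵥ w k := by
  simp only [dotProduct, Finset.sum_apply, Finset.mul_sum]
  exact Finset.sum_comm

/-- If a nonzero real homogeneous polynomial `h` of degree `d` has a determinantal
representation `h = det(x_1 A_1 + ⋯ + x_n A_n)` with each `A_k` positive semidefinite,
then `h` is stable: it does not vanish when all variables lie in the open upper half-plane. -/
theorem determinantal_stable {n d : ℕ} (h : MvPolynomial (Fin n) ℝ)
    (hhom : h.IsHomogeneous d)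
    (A : Fin n → Matrix (Fin d) (Fin d) ℝ)
    (hA : ∀ k, (A k).PosSemidef)
    (hdet : ∀ x : Fin n → ℝ, eval x h = (∑ k, x k • A k).det)
    (hne : h ≠ 0) :
    ∀ z : Fin n → ℂ, (∀ j, 0 < (z j).im) →
      eval z (map (algebraMap ℝ ℂ) h) ≠ 0 := by
  classical
  set f : ℝ →+* ℂ := algebraMap ℝ ℂ with hfdef
  -- The matrix of polynomials
  set M : Matrix (Fin d) (Fin d) (MvPolynomial (Fin n) ℝ) :=
    ∑ k, (X k : MvPolynomial (Fin n) ℝ) • (A k).map (C : ℝ →+* MvPolynomial (Fin n) ℝ) with hMdef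
  -- h is the determinant polynomial
  have hM : h = M.det := by
    apply MvPolynomial.funext
    intro x
    rw [hdet x, (eval x).map_det M]
    congr 1
    ext i j
    simp [hMdef, Matrix.sum_apply]
  -- key evaluation identity over ℂ
  have key : ∀ w : Fin n → ℂ,
      eval w (map f h) = (∑ k, w k • (A k).map f).det := by
    intro w
    have : eval w (map f h) = ((eval w).comp (map f)) h := rfl
    rw [this, hM, ((eval w).comp (map f)).map_det M]
    congr 1
    ext i j
    simp [hMdef, Matrix.sum_apply]
  intro z hz hzero
  have hNdet : (∑ k, z k • (A k).map f).det = 0 := by rw [← key z]; exact hzero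
  obtain ⟨v, hv0, hv⟩ := Matrix.exists_mulVec_eq_zero_iff.mpr hNdet
  -- the quadratic forms
  set c : Fin n → ℂ := fun k => star v ⬝ᵥ ((A k).map f) *ᵥ v with hcdef
  have hcnn : ∀ k, 0 ≤ (c k).re ∧ (c k).im = 0 := by
    intro k
    have : 0 ≤ c k := (posSemidef_map_complex (hA k)).dotProduct_mulVec_nonneg v
    rw [Complex.le_def] at this
    exact ⟨by simpa using this.1, by simpa using this.2.symm⟩
  have hsum : ∑ k, z k * c k = 0 := by
    have h1 : star v ⬝ᵥ (∑ k, z k • (A k).map f) *ᵥ v = 0 := by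
      rw [hv, dotProduct_zero]
    rw [sum_mulVec', dotProduct_sum'] at h1
    simp only [Matrix.smul_mulVec, dotProduct_smul, smul_eq_mul] at h1
    exact h1
  have hker : ∀ k, ((A k).map f) *ᵥ v = 0 := by
    have him : ∑ k, (z k).im * (c k).re = 0 := by
      have := congrArg Complex.im hsum
      simpa [Complex.im_sum, Complex.mul_im, (hcnn _).2] using this
    have hterm : ∀ k ∈ Finset.univ, (z k).im * (c k).re = 0 := by
      rw [Finset.sum_eq_zero_iff_of_nonneg] at him
      · exact him
      · intro k _
        exact mul_nonneg (hz k).le (hcnn k).1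
    intro k
    have hcre : (c k).re = 0 := by
      have := hterm k (Finset.mem_univ k)
      rcases mul_eq_zero.mp this with h' | h'
      · exact absurd h' (hz k).ne'
      · exact h'
    have hc0 : c k = 0 := Complex.ext hcre (hcnn k).2
    exact ((posSemidef_map_complex (hA k)).dotProduct_mulVec_zero_iff v).mp hc0
  -- then the complexified polynomial vanishes everywhere
  have hall : ∀ w : Fin n → ℂ, eval w (map f h) = 0 := by
    intro w
    rw [key w]
    apply Matrix.exists_mulVec_eq_zero_iff.mp
    refine ⟨v, hv0, ?_⟩
    rw [sum_mulVec']
    simp [Matrix.smul_mulVec, hker]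
  have hmap0 : map f h = 0 := MvPolynomial.funext fun w => by simpa using hall w
  exact hne (MvPolynomial.map_injective f (RingHom.injective f) (by simpa using hmap0))
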